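/- Let n be a non-negative integer and let r be a real number with 0 < r < 1/2. Then (1/(2πi)) · ∮_{|z|=r} dz / (z^{n+1} (1−z)^{n+1} (1−2z)) = 4^n. -/

import Mathlib

open Finset
open Complex


lemma aux (m : ℕ) (u W S : ℂ) (hu : u ≠ 0) (hW : W ≠ 0)
    (hgeom : S * u^2 = 1 - 4^(m+1) * W) :
    1/(W*u) = u*S/W + (4:ℂ)^(m+1)*u⁻¹ := by
  field_simp
  linear_combination -hgeom

theorem key' (n : ℕ) (z : ℂ) (hz : z ≠ 0) (h1 : (1:ℂ) - z ≠ 0) (h2 : (1:ℂ) - 2*z ≠ 0) :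
    1 / (z ^ (n + 1) * (1 - z) ^ (n + 1) * (1 - 2 * z))
      = (∑ k ∈ range n, (4:ℂ)^k * (1 - 2*z) * (z*(1-z))^(-((n+1-k : ℕ)):ℤ))
        + 4^n * z⁻¹ - 4^n * (1-z)⁻¹ + 4^(n+1) * (1-2*z)⁻¹ := by
  have hw : z * (1 - z) ≠ 0 := mul_ne_zero hz h1
  set w : ℂ := z * (1 - z) with hwdef
  have hterm : ∀ k ∈ range (n+1), (4:ℂ)^k * (1 - 2*z) * w^(-((n+1-k : ℕ)):ℤ)
      = (1 - 2*z) * (4*w)^k / w^(n+1) := by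
    intro k hk
    have hkle : k ≤ n + 1 := by simp at hk; omega
    have hpow : w ^ (n+1) = w ^ (n+1-k) * w ^ k := by
      rw [← pow_add, Nat.sub_add_cancel hkle]
    rw [zpow_neg, zpow_natCast, mul_pow 4 w k, hpow,
      show (1 - 2*z) * ((4:ℂ)^k * w^k) = ((1-2*z) * 4^k) * w^k by ring,
      mul_div_mul_right _ _ (pow_ne_zero k hw), div_eq_mul_inv]
    ring
  have hgeom : (∑ k ∈ range (n+1), (4*w)^k) * (1 - 4*w) = 1 - (4*w)^(n+1) := by
    linear_combination -geom_sum_mul (4*w) (n+1)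
  have hsum : (∑ k ∈ range n, (4:ℂ)^k * (1 - 2*z) * w^(-((n+1-k : ℕ)):ℤ))
      = (1 - 2*z) * (∑ k ∈ range (n+1), (4*w)^k) / w^(n+1) - 4^n * (1-2*z) / w := by
    have h1' : (∑ k ∈ range (n+1), (4:ℂ)^k * (1 - 2*z) * w^(-((n+1-k : ℕ)):ℤ))
        = (1 - 2*z) * (∑ k ∈ range (n+1), (4*w)^k) / w^(n+1) := by
      rw [sum_congr rfl hterm, ← sum_div, mul_sum]
    rw [sum_range_succ] at h1'
    have hlast : (4:ℂ)^n * (1 - 2*z) * w^(-((n+1-n : ℕ)):ℤ) = 4^n * (1-2*z) / w := by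
      have h : n + 1 - n = 1 := by omega
      rw [h, div_eq_mul_inv]
      norm_num
    rw [hlast] at h1'
    linear_combination h1'
  rw [hsum]
  set S := ∑ k ∈ range (n+1), (4*w)^k with hS
  have hgeom' : S * (1-2*z)^2 = 1 - 4^(n+1) * w^(n+1) := by
    rw [mul_pow] at hgeom
    have hu2 : ((1:ℂ)-2*z)^2 = 1 - 4*w := by rw [hwdef]; ring
    rw [hu2]
    linear_combination hgeom
  have hsplit : (4:ℂ)^n * z⁻¹ - 4^n * (1-z)⁻¹ = 4^n*(1-2*z)/w := by
    rw [hwdef]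
    field_simp
    ring
  have hT := aux n (1-2*z) (w^(n+1)) S h2 (pow_ne_zero _ hw) hgeom'
  have hzw : z^(n+1)*(1-z)^(n+1) = w^(n+1) := by rw [hwdef, mul_pow]
  rw [hzw]
  linear_combination hT - hsplit

/-- Lemma 4.1 (Lemma 11) of Krattenthaler–Schneider. -/
theorem contour_integral_lemma11 (n : ℕ) (r : ℝ) (hr0 : 0 < r) (hr : r < 1 / 2) :
    (1 / (2 * (Real.pi : ℂ) * Complex.I)) *
      (∮ z in C(0, r), 1 / (z ^ (n + 1) * (1 - z) ^ (n + 1) * (1 - 2 * z)))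
    = (4 : ℂ) ^ n := by
  set f : ℂ → ℂ := fun z => 1 / (z ^ (n + 1) * (1 - z) ^ (n + 1) * (1 - 2 * z)) with hf
  -- basic facts about points on the sphere
  have hsph : ∀ z : ℂ, z ∈ Metric.sphere (0:ℂ) r →
      z ≠ 0 ∧ (1:ℂ) - z ≠ 0 ∧ (1:ℂ) - 2*z ≠ 0 := by
    intro z hzs
    rw [mem_sphere_zero_iff_norm] at hzs
    refine ⟨?_, ?_, ?_⟩
    · intro h; rw [h] at hzs; simp at hzs; linarith
    · intro h
      have : z = 1 := by linear_combination -h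
      rw [this] at hzs; simp at hzs; linarith
    · intro h
      have : z = 1/2 := by linear_combination -h/2
      rw [this] at hzs
      have hn2 : ‖(1/2 : ℂ)‖ = 1/2 := by rw [norm_div]; simp
      rw [hn2] at hzs; linarith
  have hcont : ContinuousOn f (Metric.sphere (0:ℂ) r) := by
    apply ContinuousOn.div continuousOn_const (by fun_prop)
    intro z hzs
    obtain ⟨h0, h1, h2⟩ := hsph z hzs
    exact mul_ne_zero (mul_ne_zero (pow_ne_zero _ h0) (pow_ne_zero _ h1)) h2
  have hIf : CircleIntegrable f 0 r := hcont.circleIntegrable hr0.le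
  have hIg : CircleIntegrable (fun z : ℂ => (4:ℂ)^n * z⁻¹) 0 r := by
    apply ContinuousOn.circleIntegrable hr0.le
    apply ContinuousOn.mul continuousOn_const
    apply ContinuousOn.inv₀ (continuousOn_id) (fun z hzs => (hsph z hzs).1)
  -- the antiderivative
  set G : ℂ → ℂ := fun z =>
    (∑ k ∈ range n, (-((4:ℂ)^k) / ((n-k : ℕ) : ℂ)) * (z*(1-z))^(-((n-k : ℕ)):ℤ))
      + 4^n * Complex.log (1-z) - (4^(n+1)/2) * Complex.log (1-2*z) with hG
  have hzero : (∮ z in C(0, r), (f z - (4:ℂ)^n * z⁻¹)) = 0 := by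
    apply circleIntegral.integral_eq_zero_of_hasDerivWithinAt hr0.le (f := G)
    intro z hzs
    obtain ⟨h0, h1, h2⟩ := hsph z hzs
    have hw : z * (1 - z) ≠ 0 := mul_ne_zero h0 h1
    have hnorm : ‖z‖ = r := by rwa [mem_sphere_zero_iff_norm] at hzs
    -- derivative of z * (1 - z)
    have hwd : HasDerivAt (fun y : ℂ => y * (1 - y)) (1 - 2*z) z := by
      have := (hasDerivAt_id z).mul ((hasDerivAt_const z (1:ℂ)).sub (hasDerivAt_id z))
      refine this.congr_deriv ?_
      simp only [Pi.sub_apply, id_eq]; ring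
    -- derivative of each summand
    have hsumd : HasDerivAt (fun y : ℂ => ∑ k ∈ range n,
          (-((4:ℂ)^k) / ((n-k : ℕ) : ℂ)) * (y*(1-y))^(-((n-k : ℕ)):ℤ))
        (∑ k ∈ range n, (4:ℂ)^k * (1 - 2*z) * (z*(1-z))^(-((n+1-k : ℕ)):ℤ)) z := by
      apply HasDerivAt.fun_sum
      intro k hk
      have hkn : k < n := mem_range.mp hk
      have hmne : ((n-k : ℕ) : ℂ) ≠ 0 := by
        simp only [ne_eq, Nat.cast_eq_zero]; omega
      have hd1 : HasDerivAt (fun y : ℂ => (y*(1-y))^(-((n-k : ℕ)):ℤ))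
          (((-((n-k:ℕ)):ℤ) : ℂ) * (z*(1-z))^((-((n-k : ℕ)):ℤ)-1) * (1 - 2*z)) z := by
        exact (hasDerivAt_zpow _ _ (Or.inl hw)).comp z hwd
      have hexp : (-((n-k : ℕ)):ℤ) - 1 = -((n+1-k : ℕ) : ℤ) := by omega
      rw [hexp] at hd1
      have := hd1.const_mul ((-((4:ℂ)^k)) / ((n-k : ℕ) : ℂ))
      refine this.congr_deriv ?_
      push_cast
      field_simp
    -- derivative of log(1 - y)
    have hre1 : (0:ℝ) < (1 - z).re := by
      have := Complex.abs_re_le_norm z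
      simp only [Complex.sub_re, Complex.one_re]
      have : |z.re| ≤ r := by rw [← hnorm]; exact Complex.abs_re_le_norm z
      have := abs_le.mp this
      linarith
    have hre2 : (0:ℝ) < (1 - 2*z).re := by
      have h1 : |z.re| ≤ r := by rw [← hnorm]; exact Complex.abs_re_le_norm z
      have := abs_le.mp h1
      simp only [Complex.sub_re, Complex.one_re, Complex.mul_re]
      norm_num
      linarith
    have hlog1 : HasDerivAt (fun y : ℂ => Complex.log (1-y)) (-(1-z)⁻¹) z := by
      have hmem : (1 - z) ∈ Complex.slitPlane := Or.inl hre1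
      have := (Complex.hasDerivAt_log hmem).comp z
        ((hasDerivAt_const z (1:ℂ)).sub (hasDerivAt_id z))
      refine this.congr_deriv ?_; ring
    have hlog2 : HasDerivAt (fun y : ℂ => Complex.log (1-2*y)) (-2*(1-2*z)⁻¹) z := by
      have hmem : (1 - 2*z) ∈ Complex.slitPlane := Or.inl hre2
      have := (Complex.hasDerivAt_log hmem).comp z
        ((hasDerivAt_const z (1:ℂ)).sub ((hasDerivAt_id z).const_mul 2))
      refine this.congr_deriv ?_; ring
    have hGd : HasDerivAt G
        ((∑ k ∈ range n, (4:ℂ)^k * (1 - 2*z) * (z*(1-z))^(-((n+1-k : ℕ)):ℤ))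
          + 4^n * (-(1-z)⁻¹) - (4^(n+1)/2) * (-2*(1-2*z)⁻¹)) z := by
      exact (hsumd.add (hlog1.const_mul ((4:ℂ)^n))).sub (hlog2.const_mul ((4:ℂ)^(n+1)/2))
    have heq : (∑ k ∈ range n, (4:ℂ)^k * (1 - 2*z) * (z*(1-z))^(-((n+1-k : ℕ)):ℤ))
          + 4^n * (-(1-z)⁻¹) - (4^(n+1)/2) * (-2*(1-2*z)⁻¹)
        = f z - (4:ℂ)^n * z⁻¹ := by
      rw [hf]
      simp only
      rw [key' n z h0 h1 h2]
      ring
    rw [heq] at hGd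
    exact hGd.hasDerivWithinAt
  -- assemble
  have hsub := circleIntegral.integral_sub hIf hIg
  rw [hzero] at hsub
  have hinv : (∮ z in C(0, r), ((4:ℂ)^n * z⁻¹)) = (4:ℂ)^n * (2 * Real.pi * I) := by
    rw [circleIntegral.integral_const_mul]
    congr 1
    simpa using circleIntegral.integral_sub_center_inv (0:ℂ) (ne_of_gt hr0)
  have hmain : (∮ z in C(0, r), f z) = (4:ℂ)^n * (2 * Real.pi * I) := by
    rw [← hinv]
    linear_combination -hsub
  have hmain' : circleIntegral f 0 r = (4:ℂ)^n * (2 * Real.pi * I) := hmain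
  rw [hmain']
  have hpi : (Real.pi : ℂ) ≠ 0 := by
    simpa using Real.pi_ne_zero
  field_simp
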